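/- There exists a constant C > 0, independent of α ∈ (1/2, 1), such that for all sufficiently large y > 0: ∫_{|z| > y} e^{-|z|^{2α}} |z|^{d(α−1)} dz ≤ C e^{-y^{2α}} / (2α y^{α(2−d)}), where the integral is over ℝ^d. -/

import Mathlib

open MeasureTheory Real Set

private lemma antideriv_aux {α : ℝ} (hα : 0 < α) {x : ℝ} (hx : 0 < x) :
    HasDerivAt (fun r : ℝ => -(Real.exp (-(r ^ (2*α)) / 2)) / α)
      (x ^ (2*α - 1) * Real.exp (-(x ^ (2*α)) / 2)) x := by
  have h1 : HasDerivAt (fun r : ℝ => r ^ (2*α)) (2*α * x ^ (2*α - 1)) x :=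
    Real.hasDerivAt_rpow_const (Or.inl hx.ne')
  have h2 : HasDerivAt (fun r : ℝ => -(r ^ (2*α)) / 2) (-(2*α * x ^ (2*α-1)) / 2) x :=
    h1.neg.div_const 2
  have h3 := (Real.hasDerivAt_exp (-(x ^ (2*α)) / 2)).comp x h2
  have h4 := h3.neg.div_const α
  refine h4.congr_deriv ?_
  rw [div_eq_iff hα.ne']
  ring

private lemma tail_integral {α y : ℝ} (hα : 0 < α) (hy : 0 < y) :
    (∫ r in Set.Ioi y, r ^ (2*α - 1) * Real.exp (-(r ^ (2*α)) / 2))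
      = Real.exp (-(y ^ (2*α)) / 2) / α := by
  have hderiv : ∀ x ∈ Set.Ici y, HasDerivAt (fun r : ℝ => -(Real.exp (-(r ^ (2*α)) / 2)) / α)
      (x ^ (2*α - 1) * Real.exp (-(x ^ (2*α)) / 2)) x := fun x hx =>
    antideriv_aux hα (lt_of_lt_of_le hy hx)
  have hnonneg : ∀ x ∈ Set.Ioi y, 0 ≤ x ^ (2*α - 1) * Real.exp (-(x ^ (2*α)) / 2) := fun x hx =>
    mul_nonneg (Real.rpow_nonneg (le_of_lt (hy.trans hx)) _) (Real.exp_nonneg _)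
  have htend : Filter.Tendsto (fun r : ℝ => -(Real.exp (-(r ^ (2*α)) / 2)) / α)
      Filter.atTop (nhds 0) := by
    have h1 : Filter.Tendsto (fun r : ℝ => r ^ (2*α)) Filter.atTop Filter.atTop :=
      tendsto_rpow_atTop (by linarith)
    have h2 : Filter.Tendsto (fun r : ℝ => -(r ^ (2*α)) / 2) Filter.atTop Filter.atBot := by
      apply Filter.Tendsto.atBot_div_const (by norm_num)
      exact Filter.tendsto_neg_atBot_iff.mpr h1
    have h3 := Real.tendsto_exp_atBot.comp h2
    have h4 := (h3.neg).div_const α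
    simpa using h4
  have := integral_Ioi_of_hasDerivAt_of_nonneg' hderiv hnonneg htend
  rw [this]
  field_simp
  ring

private lemma tail_integrable {α y : ℝ} (hα : 0 < α) (hy : 0 < y) :
    IntegrableOn (fun r : ℝ => r ^ (2*α - 1) * Real.exp (-(r ^ (2*α)) / 2)) (Set.Ioi y) := by
  have hderiv : ∀ x ∈ Set.Ici y, HasDerivAt (fun r : ℝ => -(Real.exp (-(r ^ (2*α)) / 2)) / α)
      (x ^ (2*α - 1) * Real.exp (-(x ^ (2*α)) / 2)) x := fun x hx =>
    antideriv_aux hα (lt_of_lt_of_le hy hx)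
  have hnonneg : ∀ x ∈ Set.Ioi y, 0 ≤ x ^ (2*α - 1) * Real.exp (-(x ^ (2*α)) / 2) := fun x hx =>
    mul_nonneg (Real.rpow_nonneg (le_of_lt (hy.trans hx)) _) (Real.exp_nonneg _)
  have htend : Filter.Tendsto (fun r : ℝ => -(Real.exp (-(r ^ (2*α)) / 2)) / α)
      Filter.atTop (nhds 0) := by
    have h1 : Filter.Tendsto (fun r : ℝ => r ^ (2*α)) Filter.atTop Filter.atTop :=
      tendsto_rpow_atTop (by linarith)
    have h2 : Filter.Tendsto (fun r : ℝ => -(r ^ (2*α)) / 2) Filter.atTop Filter.atBot := by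
      apply Filter.Tendsto.atBot_div_const (by norm_num)
      exact Filter.tendsto_neg_atBot_iff.mpr h1
    have h3 := Real.tendsto_exp_atBot.comp h2
    have h4 := (h3.neg).div_const α
    simpa using h4
  exact integrableOn_Ioi_deriv_of_nonneg' hderiv hnonneg htend

private lemma key_aux {d : ℕ} {α y r : ℝ} (hα1 : 1/2 < α) (hα2 : α < 1)
    (hyd : (d:ℝ) ≤ y) (hy1 : 1 ≤ y) (hr : y ≤ r) :
    r ^ (α * ((d:ℝ) - 2)) ≤ y ^ (α * ((d:ℝ) - 2)) * Real.exp ((r ^ (2*α) - y ^ (2*α)) / 2) := by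
  have hy0 : 0 < y := lt_of_lt_of_le one_pos hy1
  have hr0 : 0 < r := hy0.trans_le hr
  have hα0 : 0 < α := by linarith
  have h2α : 1 ≤ 2*α := by linarith
  have hAB : y ^ (2*α) ≤ r ^ (2*α) := Real.rpow_le_rpow hy0.le hr (by linarith)
  rcases le_or_gt (d:ℝ) 2 with hd2 | hd2
  · have hs : α * ((d:ℝ) - 2) ≤ 0 := mul_nonpos_of_nonneg_of_nonpos hα0.le (by linarith)
    have h1 : r ^ (α * ((d:ℝ)-2)) ≤ y ^ (α * ((d:ℝ)-2)) :=
      Real.rpow_le_rpow_of_nonpos hy0 hr hs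
    have h2 : (1:ℝ) ≤ Real.exp ((r ^ (2*α) - y ^ (2*α)) / 2) :=
      Real.one_le_exp (by linarith)
    nlinarith [Real.rpow_nonneg hy0.le (α*((d:ℝ)-2))]
  · have ht1 : 1 ≤ r / y := (one_le_div hy0).2 hr
    have ht0 : 0 < r / y := lt_of_lt_of_le one_pos ht1
    have hsplit : r ^ (α*((d:ℝ)-2)) = y ^ (α*((d:ℝ)-2)) * (r/y) ^ (α*((d:ℝ)-2)) := by
      rw [Real.div_rpow hr0.le hy0.le]
      field_simp [ne_of_gt (Real.rpow_pos_of_pos hy0 (α*((d:ℝ)-2)))]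
    rw [hsplit]
    have hys : 0 ≤ y ^ (α*((d:ℝ)-2)) := Real.rpow_nonneg hy0.le _
    apply mul_le_mul_of_nonneg_left _ hys
    rw [Real.rpow_def_of_pos ht0]
    apply Real.exp_le_exp.2
    have hlog : Real.log (r/y) ≤ r/y - 1 := Real.log_le_sub_one_of_pos ht0
    have hlog0 : 0 ≤ Real.log (r/y) := Real.log_nonneg ht1
    have hs0 : 0 ≤ α * ((d:ℝ) - 2) := mul_nonneg hα0.le (by linarith)
    -- Bernoulli
    have hb : 1 + (2*α) * (r/y - 1) ≤ (r/y) ^ (2*α) := by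
      have := one_add_mul_self_le_rpow_one_add (s := r/y - 1) (by linarith) h2α
      simpa using this
    have hdiv : (r/y) ^ (2*α) = r ^ (2*α) / y ^ (2*α) := Real.div_rpow hr0.le hy0.le _
    rw [hdiv] at hb
    have hB0 : 0 < y ^ (2*α) := Real.rpow_pos_of_pos hy0 _
    have hB1 : (d:ℝ) ≤ y ^ (2*α) := by
      have : y ^ (1:ℝ) ≤ y ^ (2*α) := Real.rpow_le_rpow_of_exponent_le hy1 h2α
      rw [Real.rpow_one] at this
      linarith
    -- from hb : (r^(2α) - y^(2α)) ≥ 2α (r/y - 1) y^(2α)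
    have hmain : (2*α) * (r/y - 1) * y ^ (2*α) ≤ r ^ (2*α) - y ^ (2*α) := by
      have := mul_le_mul_of_nonneg_right hb hB0.le
      have heq : (r ^ (2*α) / y ^ (2*α)) * y ^ (2*α) = r ^ (2*α) := by
        field_simp
      nlinarith
    have ht : 0 ≤ r/y - 1 := by linarith
    calc Real.log (r/y) * (α * ((d:ℝ)-2)) ≤ (r/y - 1) * (α * ((d:ℝ)-2)) :=
          mul_le_mul_of_nonneg_right hlog hs0
      _ ≤ (r/y - 1) * (α * y ^ (2*α)) := by
          apply mul_le_mul_of_nonneg_left _ ht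
          apply mul_le_mul_of_nonneg_left (by linarith) hα0.le
      _ ≤ (r ^ (2*α) - y ^ (2*α)) / 2 := by nlinarith

theorem stmt_9 (d : ℕ) (hd : 1 ≤ d) :
    ∃ C > (0:ℝ), ∃ y₀ > (0:ℝ), ∀ α ∈ Set.Ioo (1/2 : ℝ) 1, ∀ y ≥ y₀,
      (∫ z in {z : EuclideanSpace ℝ (Fin d) | y < ‖z‖},
          Real.exp (-(‖z‖ ^ (2 * α))) * ‖z‖ ^ ((d : ℝ) * (α - 1)))
        ≤ C * Real.exp (-(y ^ (2 * α))) / (2 * α * y ^ (α * (2 - (d : ℝ)))) := by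
  haveI : Nontrivial (EuclideanSpace ℝ (Fin d)) :=
    Module.nontrivial_of_finrank_pos (R := ℝ) (by rw [finrank_euclideanSpace_fin]; omega)
  set V : ℝ := (volume (Metric.ball (0 : EuclideanSpace ℝ (Fin d)) 1)).toReal with hV
  have hVpos : 0 < V := by
    rw [hV]
    refine ENNReal.toReal_pos (ne_of_gt (Metric.measure_ball_pos _ _ one_pos)) ?_
    exact (measure_ball_lt_top).ne
  refine ⟨2 * d * V, by positivity, (d:ℝ), by exact_mod_cast Nat.cast_pos.2 (by omega), ?_⟩
  intro α hα y hy
  obtain ⟨hα1, hα2⟩ := hα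
  have hα0 : 0 < α := by linarith
  have hy1 : (1:ℝ) ≤ y := le_trans (by exact_mod_cast hd) hy
  have hy0 : 0 < y := lt_of_lt_of_le one_pos hy1
  have h2α1 : (1:ℝ) ≤ 2*α := by linarith
  set g : ℝ → ℝ := fun r => Real.exp (-(r ^ (2*α))) * r ^ ((d:ℝ) * (α - 1)) with hgdef
  have hmeas : MeasurableSet {z : EuclideanSpace ℝ (Fin d) | y < ‖z‖} :=
    measurableSet_lt measurable_const measurable_norm
  have step1 : (∫ z in {z : EuclideanSpace ℝ (Fin d) | y < ‖z‖},
      Real.exp (-(‖z‖ ^ (2 * α))) * ‖z‖ ^ ((d : ℝ) * (α - 1)))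
      = ∫ z : EuclideanSpace ℝ (Fin d), (Set.Ioi y).indicator g ‖z‖ := by
    rw [← integral_indicator hmeas]
    refine integral_congr_ae (Filter.Eventually.of_forall fun z => ?_)
    by_cases h : y < ‖z‖ <;> simp [hgdef, Set.indicator, h]
  rw [step1, integral_fun_norm_addHaar volume ((Set.Ioi y).indicator g),
    finrank_euclideanSpace_fin]
  have hind : ∀ r : ℝ, r ^ (d-1) • (Set.Ioi y).indicator g r
      = (Set.Ioi y).indicator (fun r => r ^ (d-1) * g r) r := by
    intro r
    by_cases h : r ∈ Set.Ioi y <;> simp [h]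
  simp_rw [hind]
  rw [setIntegral_indicator measurableSet_Ioi, Set.Ioi_inter_Ioi,
    max_eq_right hy0.le]
  set A : ℝ := y ^ (2*α) with hA
  set c : ℝ := y ^ (α * ((d:ℝ)-2)) * Real.exp (-A / 2) with hc
  have hc0 : 0 ≤ c := mul_nonneg (Real.rpow_nonneg hy0.le _) (Real.exp_nonneg _)
  -- pointwise bound on Ioi y
  have hpt : ∀ r ∈ Set.Ioi y, r ^ (d-1) * g r
      ≤ c * (r ^ (2*α - 1) * Real.exp (-(r ^ (2*α)) / 2)) := by
    intro r hr
    have hry : y < r := hr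
    have hr0 : 0 < r := hy0.trans hry
    have hkey := key_aux (d := d) hα1 hα2 hy hy1 hry.le
    have e1 : (r:ℝ) ^ (d-1) = r ^ ((d:ℝ) - 1) := by
      rw [← Real.rpow_natCast r (d-1), Nat.cast_sub hd, Nat.cast_one]
    have e3 : Real.exp (-(r ^ (2*α))) = Real.exp (-(r ^ (2*α))/2) * Real.exp (-(r ^ (2*α))/2) := by
      rw [← Real.exp_add]; ring_nf
    have e2 : r ^ ((d:ℝ)-1) * r ^ ((d:ℝ)*(α-1)) = r ^ (α*((d:ℝ)-2)) * r ^ (2*α-1) := by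
      rw [← Real.rpow_add hr0, ← Real.rpow_add hr0]; ring_nf
    have lhs_eq : r ^ (d-1) * g r
        = (r ^ (α*((d:ℝ)-2)) * Real.exp (-(r ^ (2*α))/2))
          * (r ^ (2*α-1) * Real.exp (-(r ^ (2*α))/2)) := by
      rw [hgdef]
      simp only []
      rw [e1, e3]
      calc r ^ ((d:ℝ)-1) * (Real.exp (-(r ^ (2*α))/2) * Real.exp (-(r ^ (2*α))/2)
            * r ^ ((d:ℝ)*(α-1)))
          = (r ^ ((d:ℝ)-1) * r ^ ((d:ℝ)*(α-1)))
            * (Real.exp (-(r ^ (2*α))/2) * Real.exp (-(r ^ (2*α))/2)) := by ring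
        _ = _ := by rw [e2]; ring
    rw [lhs_eq]
    have hfac : r ^ (α*((d:ℝ)-2)) * Real.exp (-(r ^ (2*α))/2) ≤ c := by
      rw [hc, hA]
      calc r ^ (α*((d:ℝ)-2)) * Real.exp (-(r ^ (2*α))/2)
          ≤ (y ^ (α * ((d:ℝ) - 2)) * Real.exp ((r ^ (2*α) - y ^ (2*α)) / 2))
            * Real.exp (-(r ^ (2*α))/2) :=
            mul_le_mul_of_nonneg_right hkey (Real.exp_nonneg _)
        _ = y ^ (α * ((d:ℝ)-2)) * Real.exp (-(y ^ (2*α)) / 2) := by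
            rw [mul_assoc, ← Real.exp_add]; ring_nf
    exact mul_le_mul_of_nonneg_right hfac
      (mul_nonneg (Real.rpow_nonneg hr0.le _) (Real.exp_nonneg _))
  -- integral bound
  have hGint : Integrable
      (fun r : ℝ => c * (r ^ (2*α - 1) * Real.exp (-(r ^ (2*α)) / 2)))
      (volume.restrict (Set.Ioi y)) := (tail_integrable hα0 hy0).const_mul c
  have hI : (∫ r in Set.Ioi y, r ^ (d-1) * g r)
      ≤ c * (Real.exp (-A / 2) / α) := by
    have hmono := integral_mono_of_nonneg (μ := volume.restrict (Set.Ioi y))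
      (f := fun r => r ^ (d-1) * g r)
      (g := fun r => c * (r ^ (2*α - 1) * Real.exp (-(r ^ (2*α)) / 2)))
      ?_ hGint ?_
    · refine hmono.trans (le_of_eq ?_)
      rw [MeasureTheory.integral_const_mul, tail_integral hα0 hy0, hA]
    · filter_upwards [self_mem_ae_restrict (measurableSet_Ioi (a := y))] with r hr
      have hr0 : 0 < r := hy0.trans hr
      exact mul_nonneg (pow_nonneg hr0.le _)
        (mul_nonneg (Real.exp_nonneg _) (Real.rpow_nonneg hr0.le _))
    · filter_upwards [self_mem_ae_restrict (measurableSet_Ioi (a := y))] with r hr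
      exact hpt r hr
  -- final arithmetic
  have hrhs : 2 * (d:ℝ) * V * Real.exp (-A) / (2 * α * y ^ (α * (2 - (d:ℝ))))
      = (d:ℝ) * V * (c * (Real.exp (-A / 2) / α)) := by
    have hinv : y ^ (α * (2 - (d:ℝ))) = (y ^ (α * ((d:ℝ) - 2)))⁻¹ := by
      rw [← Real.rpow_neg hy0.le]
      ring_nf
    have hexp : Real.exp (-A / 2) * Real.exp (-A / 2) = Real.exp (-A) := by
      rw [← Real.exp_add]; ring_nf
    rw [hc, hinv, ← hexp]
    have hyp0 : (0:ℝ) < y ^ (α * ((d:ℝ) - 2)) := Real.rpow_pos_of_pos hy0 _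
    field_simp
  rw [hrhs, nsmul_eq_mul, smul_eq_mul, ← mul_assoc]
  exact mul_le_mul_of_nonneg_left hI (by positivity)
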